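/- For the Poisson structure π = x² ∂/∂x ∧ ∂/∂y on ℂ[x,y], the first Poisson cohomology H¹_π is infinite-dimensional with basis given by the classes of the vector fields (k y^{k-1} x) ∂/∂x + y^k ∂/∂y for k ∈ ℕ, together with x ∂/∂y. That is, H¹_π ≅ ⊕_{k∈ℕ} ℂ·(k y^{k-1}x ∂/∂x + y^k ∂/∂y) ⊕ ℂ·(x ∂/∂y). -/

import Mathlib

noncomputable section

open MvPolynomial

abbrev R2 := MvPolynomial (Fin 2) ℂ

def Xv : R2 := X 0
def Yv : R2 := X 1

/-- `(f,g)` (meaning `f∂/∂x + g∂/∂y`) is a Poisson vector field for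
`π = x² ∂/∂x ∧ ∂/∂y`, i.e. `x²(∂f/∂x + ∂g/∂y) = 2xf`. -/
def IsCocycle (v : R2 × R2) : Prop :=
  Xv ^ 2 * (pderiv 0 v.1 + pderiv 1 v.2) = 2 * Xv * v.1

/-- The Hamiltonian vector field of `h`: `−x²(∂h/∂y)∂/∂x + x²(∂h/∂x)∂/∂y`. -/
def ham (h : R2) : R2 × R2 := (- (Xv ^ 2 * pderiv 1 h), Xv ^ 2 * pderiv 0 h)

/-- The basis vector fields `(k y^{k-1} x) ∂/∂x + y^k ∂/∂y`. -/
def bvf (k : ℕ) : R2 × R2 := ((k : R2) * Yv ^ (k - 1) * Xv, Yv ^ k)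

/-- The extra basis vector field `x ∂/∂y`. -/
def wvf : R2 × R2 := (0, Xv)

namespace Aux

def E (a b : ℕ) : Fin 2 →₀ ℕ := Finsupp.single 0 a + Finsupp.single 1 b

@[simp] lemma E_apply_zero (a b : ℕ) : E a b 0 = a := by
  simp [E, Finsupp.single_apply]

@[simp] lemma E_apply_one (a b : ℕ) : E a b 1 = b := by
  simp [E, Finsupp.single_apply]

lemma eq_E (m : Fin 2 →₀ ℕ) : m = E (m 0) (m 1) := by
  ext i
  fin_cases i <;> simp

lemma E_inj {a b a' b' : ℕ} (h : E a b = E a' b') : a = a' ∧ b = b' := by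
  constructor
  · have := congrArg (fun m => m 0) h; simpa using this
  · have := congrArg (fun m => m 1) h; simpa using this

@[simp] lemma E_add (a b c d : ℕ) : E a b + E c d = E (a + c) (b + d) := by
  ext i; fin_cases i <;> simp

lemma E_add_single0 (a b : ℕ) : E a b + Finsupp.single 0 1 = E (a + 1) b := by
  ext i; fin_cases i <;> simp [Finsupp.single_apply]

lemma E_add_single1 (a b : ℕ) : E a b + Finsupp.single 1 1 = E a (b + 1) := by
  ext i; fin_cases i <;> simp [Finsupp.single_apply]

/-- Coefficient function. -/
def cf (p : R2) (a b : ℕ) : ℂ := coeff (E a b) p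

lemma ext_cf {p q : R2} (h : ∀ a b, cf p a b = cf q a b) : p = q := by
  apply MvPolynomial.ext
  intro m
  rw [eq_E m]
  exact h (m 0) (m 1)

@[simp] lemma cf_add (p q : R2) (a b : ℕ) : cf (p + q) a b = cf p a b + cf q a b :=
  coeff_add _ _ _

@[simp] lemma cf_neg (p : R2) (a b : ℕ) : cf (-p) a b = - cf p a b := by
  simp [cf]

@[simp] lemma cf_zero (a b : ℕ) : cf 0 a b = 0 := by simp [cf]

@[simp] lemma cf_smul (r : ℂ) (p : R2) (a b : ℕ) : cf (r • p) a b = r * cf p a b :=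
  coeff_smul _ _ _

lemma cf_monomial (s t a b : ℕ) (r : ℂ) :
    cf (monomial (E s t) r) a b = if s = a ∧ t = b then r else 0 := by
  rw [cf, coeff_monomial]
  by_cases h : s = a ∧ t = b
  · simp [h.1, h.2]
  · rw [if_neg h, if_neg]
    intro he
    exact h (E_inj he)

/-- coefficient of pderiv -/
lemma coeff_pderiv (i : Fin 2) (p : R2) (m : Fin 2 →₀ ℕ) :
    coeff m (pderiv i p) = ((m i : ℂ) + 1) * coeff (m + Finsupp.single i 1) p := by
  induction p using MvPolynomial.induction_on' with
  | add p q hp hq => simp [hp, hq, mul_add]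
  | monomial s r =>
    rw [pderiv_monomial, coeff_monomial, coeff_monomial]
    by_cases h : s i = 0
    · have h1 : s - Finsupp.single i 1 = s := by
        ext j
        by_cases hj : j = i
        · subst hj; simp [h]
        · simp [Finsupp.single_apply, Ne.symm hj]
      rw [h1]
      have hR : s ≠ m + Finsupp.single i 1 := by
        intro he
        have := congrArg (fun k => k i) he
        simp [h] at this
      rw [if_neg hR, mul_zero]
      split <;> simp [h]
    · have hle : Finsupp.single i 1 ≤ s := Finsupp.single_le_iff.2 (by omega)
      by_cases h2 : s = m + Finsupp.single i 1
      · have h3 : s - Finsupp.single i 1 = m := by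
          rw [h2, add_tsub_cancel_right]
        rw [if_pos h3, if_pos h2]
        have h4 : s i = m i + 1 := by rw [h2]; simp
        rw [h4]
        push_cast
        ring
      · rw [if_neg h2, mul_zero, if_neg]
        intro h3
        apply h2
        rw [← h3, tsub_add_cancel_of_le hle]

lemma cf_pderiv0 (p : R2) (a b : ℕ) :
    cf (pderiv 0 p) a b = ((a : ℂ) + 1) * cf p (a + 1) b := by
  rw [cf, coeff_pderiv, cf, E_add_single0]
  simp

lemma cf_pderiv1 (p : R2) (a b : ℕ) :
    cf (pderiv 1 p) a b = ((b : ℂ) + 1) * cf p a (b + 1) := by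
  rw [cf, coeff_pderiv, cf, E_add_single1]
  simp

lemma single_eq_E (n : ℕ) : Finsupp.single (0 : Fin 2) n = E n 0 := by
  ext i; fin_cases i <;> simp

lemma Xv_pow_eq (n : ℕ) : (X 0 : R2) ^ n = monomial (E n 0) 1 := by
  rw [X_pow_eq_monomial, single_eq_E]

lemma cf_X2_mul (p : R2) (a b : ℕ) : cf ((X 0 : R2) ^ 2 * p) (a + 2) b = cf p a b := by
  rw [Xv_pow_eq, cf, cf]
  have : E (a + 2) b = E 2 0 + E a b := by rw [E_add]; congr 1 <;> omega
  rw [this, coeff_monomial_mul, one_mul]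

lemma cf_X2_mul_low (p : R2) (b : ℕ) {a : ℕ} (ha : a < 2) :
    cf ((X 0 : R2) ^ 2 * p) a b = 0 := by
  rw [Xv_pow_eq, cf, coeff_monomial_mul', if_neg]
  intro hle
  have := hle 0
  simp at this
  omega

lemma cf_X_mul (p : R2) (a b : ℕ) : cf ((X 0 : R2) * p) (a + 1) b = cf p a b := by
  have := cf_X2_mul p a b  -- template
  rw [show ((X 0 : R2) * p) = monomial (E 1 0) 1 * p by rw [← Xv_pow_eq 1, pow_one]]
  rw [cf, cf]
  have h2 : E (a + 1) b = E 1 0 + E a b := by rw [E_add]; congr 1 <;> omega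
  rw [h2, coeff_monomial_mul, one_mul]

lemma cf_X_mul_zero (p : R2) (b : ℕ) : cf ((X 0 : R2) * p) 0 b = 0 := by
  rw [show ((X 0 : R2) * p) = monomial (E 1 0) 1 * p by rw [← Xv_pow_eq 1, pow_one]]
  rw [cf, coeff_monomial_mul', if_neg]
  intro hle
  have := hle 0
  simp at this

/-- first part of the primitive: integrates the `x^{≥2}` part of `g` in `x`. -/
def h1 (g : R2) : R2 :=
  ∑ m ∈ g.support, monomial (E (m 0 - 1) (m 1))
    (if 2 ≤ m 0 then coeff m g / ((m 0 : ℂ) - 1) else 0)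

/-- second part of the primitive: `-∫ (coeff of x² in f) dy`. -/
def h2 (f : R2) : R2 :=
  ∑ m ∈ f.support, monomial (E 0 (m 1 + 1))
    (if m 0 = 2 then - coeff m f / ((m 1 : ℂ) + 1) else 0)

lemma cf_h1 (g : R2) (a b : ℕ) :
    cf (h1 g) (a + 1) b = cf g (a + 2) b / ((a : ℂ) + 1) := by
  rw [h1, cf, coeff_sum]
  rw [Finset.sum_eq_single (E (a + 2) b)]
  · simp only [coeff_monomial, E_apply_zero, E_apply_one]
    rw [show a + 2 - 1 = a + 1 from by omega, if_pos rfl, if_pos (by omega)]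
    rw [cf]
    push_cast
    ring_nf
  · intro m _ hm
    rw [coeff_monomial]
    split_ifs with he hle
    · exfalso
      apply hm
      obtain ⟨h1', h2'⟩ := E_inj he
      rw [eq_E m, h2']
      congr 1
      omega
    · rfl
    · rfl
  · intro hns
    rw [coeff_monomial]
    have : coeff (E (a + 2) b) g = 0 := notMem_support_iff.mp hns
    split_ifs <;> simp [this]

lemma cf_h1_zero (g : R2) (b : ℕ) : cf (h1 g) 0 b = 0 := by
  rw [h1, cf, coeff_sum]
  apply Finset.sum_eq_zero
  intro m _
  rw [coeff_monomial]
  split_ifs with he hle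
  · exfalso
    obtain ⟨h1', _⟩ := E_inj he
    omega
  · rfl
  · rfl

lemma cf_h2 (f : R2) (b : ℕ) :
    cf (h2 f) 0 (b + 1) = - cf f 2 b / ((b : ℂ) + 1) := by
  rw [h2, cf, coeff_sum]
  rw [Finset.sum_eq_single (E 2 b)]
  · rw [coeff_monomial, if_pos, if_pos]
    · simp [cf]
    · simp
    · simp
  · intro m _ hm
    rw [coeff_monomial]
    split_ifs with he h2'
    · exfalso
      apply hm
      obtain ⟨_, hb⟩ := E_inj he
      rw [eq_E m, h2']
      congr 1
      omega
    · rfl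
    · rfl
  · intro hns
    rw [coeff_monomial]
    have : coeff (E 2 b) f = 0 := notMem_support_iff.mp hns
    split_ifs <;> simp [this]

lemma cf_h2_pos (f : R2) (a b : ℕ) : cf (h2 f) (a + 1) b = 0 := by
  rw [h2, cf, coeff_sum]
  apply Finset.sum_eq_zero
  intro m _
  rw [coeff_monomial]
  split_ifs with he h2' <;>
    first
      | rfl
      | (exfalso; obtain ⟨ha, _⟩ := E_inj he; omega)

lemma cf_h2_00 (f : R2) : cf (h2 f) 0 0 = 0 := by
  rw [h2, cf, coeff_sum]
  apply Finset.sum_eq_zero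
  intro m _
  rw [coeff_monomial]
  split_ifs with he h2' <;>
    first
      | rfl
      | (exfalso; obtain ⟨_, hb⟩ := E_inj he; omega)

lemma single1_eq_E (k : ℕ) : Finsupp.single (1 : Fin 2) k = E 0 k := by
  ext i; fin_cases i <;> simp

lemma Yv_pow_eq (k : ℕ) : (X 1 : R2) ^ k = monomial (E 0 k) 1 := by
  rw [X_pow_eq_monomial, single1_eq_E]

lemma bvf_fst (k : ℕ) : (bvf k).1 = monomial (E 1 (k - 1)) (k : ℂ) := by
  rw [bvf]
  show (k : R2) * Yv ^ (k - 1) * Xv = _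
  rw [Yv, Xv, Yv_pow_eq, show (X 0 : R2) = monomial (E 1 0) 1 from by rw [← Xv_pow_eq 1, pow_one],
    (map_natCast (C : ℂ →+* R2) k).symm]
  rw [mul_assoc, monomial_mul, C_mul_monomial]
  rw [E_add]
  norm_num

lemma bvf_snd (k : ℕ) : (bvf k).2 = monomial (E 0 k) 1 := Yv_pow_eq k

lemma cf_two_X_mul (p : R2) (a b : ℕ) : cf (2 * X 0 * p) (a + 1) b = 2 * cf p a b := by
  rw [mul_assoc, ← map_ofNat (C : ℂ →+* R2) 2, cf, coeff_C_mul, ← cf, cf_X_mul]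

-- cocycle coefficient identities
section Cocycle
variable {f g : R2} (hc : IsCocycle (f, g))
include hc

lemma K0 (b : ℕ) : cf f 0 b = 0 := by
  have h := congrArg (fun p => cf p 1 b) hc
  simp only [IsCocycle, Xv] at h
  rw [cf_X2_mul_low _ _ (by omega), show (1 : ℕ) = 0 + 1 from rfl, cf_two_X_mul] at h
  linear_combination -h / 2

lemma K (n b : ℕ) :
    ((n : ℂ) + 1) * cf f (n + 1) b + ((b : ℂ) + 1) * cf g n (b + 1) = 2 * cf f (n + 1) b := by
  have h := congrArg (fun p => cf p (n + 2) b) hc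
  simp only [IsCocycle, Xv] at h
  rw [cf_X2_mul, cf_add, cf_pderiv0, cf_pderiv1,
    show n + 2 = (n + 1) + 1 from rfl, cf_two_X_mul] at h
  exact h


lemma k1 (b : ℕ) : cf f 1 b = ((b : ℂ) + 1) * cf g 0 (b + 1) := by
  have h := K hc 0 b
  push_cast at h
  linear_combination -h

lemma k2 (b : ℕ) : cf g 1 (b + 1) = 0 := by
  have h := K hc 1 b
  push_cast at h
  have hb : ((b : ℂ) + 1) ≠ 0 := Nat.cast_add_one_ne_zero b
  have h2 : ((b : ℂ) + 1) * cf g 1 (b + 1) = 0 := by linear_combination h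
  exact (mul_eq_zero.mp h2).resolve_left hb

lemma k3 (n b : ℕ) : ((n : ℂ) + 1) * cf f (n + 3) b = -(((b : ℂ) + 1) * cf g (n + 2) (b + 1)) := by
  have h := K hc (n + 2) b
  rw [show n + 2 + 1 = n + 3 from rfl] at h
  push_cast at h
  linear_combination h

end Cocycle

lemma cf_finsum {ι : Type*} (s : Finset ι) (F : ι → R2) (a b : ℕ) :
    cf (∑ i ∈ s, F i) a b = ∑ i ∈ s, cf (F i) a b := by
  rw [cf, coeff_sum]
  rfl

section Sums
variable (c : ℕ →₀ ℂ)

lemma cf_sum_fst_one (b : ℕ) :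
    cf ((c.sum fun k a => a • bvf k).1) 1 b = ((b : ℂ) + 1) * c (b + 1) := by
  rw [Finsupp.sum, Prod.fst_sum]
  simp only [Prod.smul_fst]
  rw [cf_finsum]
  have hterm : ∀ k, cf (c k • (bvf k).1) 1 b = c k * (if k - 1 = b then (k : ℂ) else 0) := by
    intro k
    rw [cf_smul, bvf_fst, cf_monomial]
    congr 1
    by_cases h : k - 1 = b <;> simp [h]
  simp only [hterm]
  rw [Finset.sum_eq_single (b + 1)]
  · rw [if_pos (by omega)]
    push_cast
    ring
  · intro j _ hj
    split_ifs with h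
    · have hj0 : j = 0 := by omega
      subst hj0
      simp
    · rw [mul_zero]
  · intro h
    rw [Finsupp.notMem_support_iff.mp h, zero_mul]

lemma cf_sum_fst_ne (a b : ℕ) (ha : a ≠ 1) :
    cf ((c.sum fun k a => a • bvf k).1) a b = 0 := by
  rw [Finsupp.sum, Prod.fst_sum]
  simp only [Prod.smul_fst]
  rw [cf_finsum]
  apply Finset.sum_eq_zero
  intro k _
  rw [cf_smul, bvf_fst, cf_monomial, if_neg, mul_zero]
  intro hcon
  exact ha hcon.1.symm

lemma cf_sum_snd_zero (b : ℕ) :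
    cf ((c.sum fun k a => a • bvf k).2) 0 b = c b := by
  rw [Finsupp.sum, Prod.snd_sum]
  simp only [Prod.smul_snd]
  rw [cf_finsum]
  have hterm : ∀ k, cf (c k • (bvf k).2) 0 b = c k * (if k = b then (1 : ℂ) else 0) := by
    intro k
    rw [cf_smul, bvf_snd, cf_monomial]
    congr 1
    by_cases h : k = b <;> simp [h]
  simp only [hterm]
  rw [Finset.sum_eq_single b]
  · rw [if_pos rfl, mul_one]
  · intro j _ hj
    rw [if_neg hj, mul_zero]
  · intro h
    rw [Finsupp.notMem_support_iff.mp h, zero_mul]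

lemma cf_sum_snd_ne (a b : ℕ) (ha : a ≠ 0) :
    cf ((c.sum fun k a => a • bvf k).2) a b = 0 := by
  rw [Finsupp.sum, Prod.snd_sum]
  simp only [Prod.smul_snd]
  rw [cf_finsum]
  apply Finset.sum_eq_zero
  intro k _
  rw [cf_smul, bvf_snd, cf_monomial, if_neg, mul_zero]
  intro hcon
  exact ha hcon.1.symm

end Sums

lemma cf_Xv (a b : ℕ) : cf (X 0 : R2) a b = if a = 1 ∧ b = 0 then 1 else 0 := by
  rw [show (X 0 : R2) = monomial (E 1 0) 1 from by rw [← Xv_pow_eq 1, pow_one], cf_monomial]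
  by_cases h : a = 1 ∧ b = 0
  · rw [if_pos ⟨h.1.symm, h.2.symm⟩, if_pos h]
  · rw [if_neg, if_neg h]
    intro hcon
    exact h ⟨hcon.1.symm, hcon.2.symm⟩

end Aux

open Aux

/-- For `π = x² ∂/∂x ∧ ∂/∂y`, `H¹_π` is infinite dimensional with basis the classes of
`k y^{k-1}x ∂/∂x + y^k ∂/∂y` (`k ∈ ℕ`) and `x ∂/∂y`: these are Poisson vector fields,
every Poisson vector field is a finite linear combination of them plus a Hamiltonian one,
and no nontrivial linear combination of them is Hamiltonian. -/
theorem stmt_11 :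
    (∀ k : ℕ, IsCocycle (bvf k)) ∧ IsCocycle wvf ∧
    (∀ v : R2 × R2, IsCocycle v →
      ∃ (c : ℕ →₀ ℂ) (c' : ℂ) (h : R2),
        v = (c.sum fun k a => a • bvf k) + c' • wvf + ham h) ∧
    (∀ (c : ℕ →₀ ℂ) (c' : ℂ) (h : R2),
      (c.sum fun k a => a • bvf k) + c' • wvf = ham h → c = 0 ∧ c' = 0) := by
  refine ⟨?_, ?_, ?_, ?_⟩
  · -- bvf k is a cocycle
    intro k
    simp only [IsCocycle, bvf, Xv, Yv]
    rw [← map_natCast (C : ℂ →+* R2) k]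
    simp [pderiv_mul, pderiv_pow, pderiv_X_of_ne (show (1 : Fin 2) ≠ 0 by decide),
      pderiv_X_of_ne (show (0 : Fin 2) ≠ 1 by decide)]
    ring
  · -- wvf is a cocycle
    simp [IsCocycle, wvf, Xv, pderiv_X_of_ne (show (0 : Fin 2) ≠ 1 by decide)]
  · -- surjectivity
    intro v hv
    have hc : IsCocycle (v.1, v.2) := hv
    refine ⟨Finsupp.onFinset (v.2.support.image fun m => m 1) (fun k => cf v.2 0 k)
      (fun k hk => Finset.mem_image.2 ⟨E 0 k, mem_support_iff.2 hk, by simp⟩),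
      cf v.2 1 0, h1 v.2 + h2 v.1, ?_⟩
    set hh := h1 v.2 + h2 v.1 with hhh
    rw [Prod.ext_iff]
    constructor
    · -- first components
      simp only [Prod.fst_add, ham, wvf, Prod.smul_mk, smul_zero]
      apply ext_cf
      intro a b
      simp only [cf_add, cf_zero, cf_neg, Xv]
      rcases a with _ | _ | _ | a
      · rw [cf_sum_fst_ne _ 0 b (by omega), cf_X2_mul_low _ _ (by omega), K0 hc b]
        norm_num
      · rw [cf_sum_fst_one, cf_X2_mul_low _ _ (by omega), Finsupp.onFinset_apply,
          k1 hc b]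
        norm_num
      · have hX := cf_X2_mul (pderiv 1 hh) 0 b
        rw [show (0 + 2 : ℕ) = 2 from rfl] at hX
        rw [cf_sum_fst_ne _ 2 b (by omega), hX, cf_pderiv1, hhh, cf_add,
          cf_h1_zero, cf_h2]
        have hb : ((b : ℂ) + 1) ≠ 0 := Nat.cast_add_one_ne_zero b
        field_simp
        ring
      · have hX := cf_X2_mul (pderiv 1 hh) (a + 1) b
        rw [show (a + 1 + 2 : ℕ) = a + 3 from rfl] at hX
        rw [cf_sum_fst_ne _ (a + 3) b (by omega), hX, cf_pderiv1, hhh, cf_add,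
          cf_h1, cf_h2_pos]
        have ha : ((a : ℂ) + 1) ≠ 0 := Nat.cast_add_one_ne_zero a
        have hk3 := k3 hc a b
        simp only [show a + 1 + 1 + 1 = a + 3 from rfl]
        push_cast at hk3 ⊢
        field_simp
        linear_combination hk3
    · -- second components
      simp only [Prod.snd_add, ham, wvf, Prod.smul_mk]
      apply ext_cf
      intro a b
      simp only [cf_add, cf_smul, Xv, cf_Xv]
      rcases a with _ | _ | a
      · rw [cf_sum_snd_zero, cf_X2_mul_low _ _ (by omega), Finsupp.onFinset_apply,
          if_neg (by omega)]
        norm_num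
      · rw [cf_sum_snd_ne _ 1 b (by omega), cf_X2_mul_low _ _ (by omega)]
        rcases b with _ | b
        · rw [if_pos ⟨rfl, rfl⟩]
          norm_num
        · rw [if_neg (by omega), k2 hc b]
          norm_num
      · have hX := cf_X2_mul (pderiv 0 hh) a b
        rw [cf_sum_snd_ne _ (a + 2) b (by omega), hX, cf_pderiv0, hhh, cf_add,
          cf_h1, cf_h2_pos, if_neg (by omega)]
        have ha : ((a : ℂ) + 1) ≠ 0 := Nat.cast_add_one_ne_zero a
        field_simp
        ring
  · -- independence
    intro c c' h heq
    have h2 := congrArg Prod.snd heq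
    simp only [Prod.snd_add, ham, wvf, Prod.smul_mk] at h2
    have hc' : c' = 0 := by
      have := congrArg (fun p => cf p 1 0) h2
      simp only [cf_add, cf_smul, Xv, cf_Xv] at this
      rw [cf_sum_snd_ne _ 1 0 (by omega), cf_X2_mul_low _ _ (by omega)] at this
      simpa using this
    refine ⟨?_, hc'⟩
    ext k
    have := congrArg (fun p => cf p 0 k) h2
    simp only [cf_add, cf_smul, Xv, cf_Xv] at this
    rw [cf_sum_snd_zero, cf_X2_mul_low _ _ (by omega)] at this
    simpa using this

end
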